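/- For the Sierpiński triangle graphs: χρ(ST^0_3) = 3, χρ(ST^1_3) = 4, and χρ(ST^2_3) = 8. -/

import Mathlib

/-- The generalized Sierpiński graph `S^n_G` of a base graph `G` on the vertex set
`[k]_0 = {0, …, k−1}`: the vertices are the words of length `n` over `[k]_0`, and two
distinct words `u, v` are adjacent iff there is an index `i` with `u j = v j` for `j < i`,
`u i` adjacent to `v i` in `G`, and `u j = v i`, `v j = u i` for all `j > i`. -/
def genSierpinski {k : ℕ} (G : SimpleGraph (Fin k)) (n : ℕ) :
    SimpleGraph (Fin n → Fin k) where
  Adj u v := ∃ i : Fin n,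
    (∀ j, j < i → u j = v j) ∧ G.Adj (u i) (v i) ∧ ∀ j, i < j → u j = v i ∧ v j = u i
  symm := by
    constructor
    rintro u v ⟨i, h1, h2, h3⟩
    exact ⟨i, fun j hj => (h1 j hj).symm, h2.symm, fun j hj => ⟨(h3 j hj).2, (h3 j hj).1⟩⟩
  loopless := by
    constructor
    rintro u ⟨i, -, h2, -⟩
    exact G.irrefl h2

/-- The Sierpiński graph `S^n_k`, i.e. the generalized Sierpiński graph of the complete
graph `K_k` on `[k]_0` (in which two vertices are adjacent iff they are distinct). -/
def sierpinski (k n : ℕ) : SimpleGraph (Fin n → Fin k) :=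
  genSierpinski (⊤ : SimpleGraph (Fin k)) n

/-- `c` is a `t`-packing coloring of `G`: every vertex gets a color in `{1, …, t}`, and any
two distinct vertices with the same color `i` are at distance greater than `i`
(equivalently, every walk between them has length greater than `i`). -/
def IsPackingColoring {V : Type*} (G : SimpleGraph V) (t : ℕ) (c : V → ℕ) : Prop :=
  (∀ v, 1 ≤ c v ∧ c v ≤ t) ∧
    ∀ u v, u ≠ v → c u = c v → ∀ p : G.Walk u v, c u < p.length

/-- The packing chromatic number `χρ(G)`: the least `t` such that `G` admits a
`t`-packing coloring. -/
noncomputable def packingChromatic {V : Type*} (G : SimpleGraph V) : ℕ :=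
  sInf {t | ∃ c : V → ℕ, IsPackingColoring G t c}

/-- The relation on the vertices of `S^{n+1}_3` relating the endpoints of the non-clique
edges, i.e. the edges of the form `{w i j j … j, w j i i … i}` with `i ≠ j` (those whose
branching index is not the last index, so they have a nonempty constant suffix). -/
def nonCliqueRel (n : ℕ) (u v : Fin (n + 1) → Fin 3) : Prop :=
  ∃ i : Fin (n + 1), (i : ℕ) < n ∧ (∀ j, j < i → u j = v j) ∧ u i ≠ v i ∧
    ∀ j, i < j → u j = v i ∧ v j = u i

/-- The setoid on the vertices of `S^{n+1}_3` generated by identifying the two endpoints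
of every non-clique edge. -/
def STSetoid (n : ℕ) : Setoid (Fin (n + 1) → Fin 3) :=
  Relation.EqvGen.setoid (nonCliqueRel n)

/-- The Sierpiński triangle graph `ST^n_3`, obtained from `S^{n+1}_3` by contracting all
non-clique edges: the vertices are the equivalence classes, and two distinct classes are
adjacent iff they contain representatives adjacent in `S^{n+1}_3`. -/
def sierpinskiTriangle (n : ℕ) : SimpleGraph (Quotient (STSetoid n)) where
  Adj x y := x ≠ y ∧ ∃ u v : Fin (n + 1) → Fin 3,
    Quotient.mk (STSetoid n) u = x ∧ Quotient.mk (STSetoid n) v = y ∧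
      (sierpinski 3 (n + 1)).Adj u v
  symm := by
    constructor
    rintro x y ⟨hxy, u, v, hu, hv, h⟩
    exact ⟨hxy.symm, v, u, hv, hu, h.symm⟩
  loopless := by
    constructor
    rintro x ⟨h, -⟩
    exact h rfl


section Generic
variable {N : ℕ} (G : SimpleGraph (Fin N)) (D : Fin N → Fin N → ℕ) (nxt : Fin N → Fin N → Fin N)

lemma walk_lb (hlip : ∀ a b v, G.Adj a b → D a v ≤ D b v + 1) (h0 : ∀ u, D u u = 0)
    {u v : Fin N} (p : G.Walk u v) : D u v ≤ p.length := by
  induction p with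
  | nil => simp [h0]
  | @cons a b c h q ih =>
    have := hlip a b c h
    simp only [SimpleGraph.Walk.length_cons]
    omega

lemma walk_ex (h0 : ∀ u, D u u = 0) (hz : ∀ u v, D u v = 0 → u = v)
    (hstep : ∀ u v, u ≠ v → G.Adj u (nxt u v) ∧ D (nxt u v) v + 1 = D u v) :
    ∀ (n : ℕ) (u v : Fin N), D u v = n → ∃ p : G.Walk u v, p.length = n := by
  intro n
  induction n with
  | zero => intro u v h; cases hz u v h; exact ⟨.nil, rfl⟩
  | succ m ih =>
    intro u v h
    have hne : u ≠ v := by rintro rfl; rw [h0] at h; omega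
    obtain ⟨ha, hd⟩ := hstep u v hne
    obtain ⟨q, hq⟩ := ih (nxt u v) v (by omega)
    exact ⟨.cons ha q, by simp [hq]⟩

lemma pack_iff (hlip : ∀ a b v, G.Adj a b → D a v ≤ D b v + 1) (h0 : ∀ u, D u u = 0)
    (hz : ∀ u v, D u v = 0 → u = v)
    (hstep : ∀ u v, u ≠ v → G.Adj u (nxt u v) ∧ D (nxt u v) v + 1 = D u v)
    (t : ℕ) (c : Fin N → ℕ) :
    IsPackingColoring G t c ↔
      ((∀ v, 1 ≤ c v ∧ c v ≤ t) ∧ ∀ u v, u ≠ v → c u = c v → c u < D u v) := by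
  constructor
  · rintro ⟨h1, h2⟩
    refine ⟨h1, fun u v hne hc => ?_⟩
    obtain ⟨p, hp⟩ := walk_ex G D nxt h0 hz hstep (D u v) u v rfl
    exact hp ▸ h2 u v hne hc p
  · rintro ⟨h1, h2⟩
    exact ⟨h1, fun u v hne hc p => lt_of_lt_of_le (h2 u v hne hc) (walk_lb G D hlip h0 p)⟩

end Generic

lemma pc_mono {V : Type*} {G : SimpleGraph V} {t t' : ℕ} {c : V → ℕ}
    (h : t ≤ t') (hc : IsPackingColoring G t c) : IsPackingColoring G t' c :=
  ⟨fun v => ⟨(hc.1 v).1, le_trans (hc.1 v).2 h⟩, hc.2⟩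

lemma pc_eq {V : Type*} (G : SimpleGraph V) (m : ℕ)
    (h1 : ∃ c, IsPackingColoring G m c)
    (h2 : ¬∃ c, IsPackingColoring G (m - 1) c) :
    packingChromatic G = m := by
  apply le_antisymm
  · exact Nat.sInf_le h1
  · apply le_csInf ⟨m, h1⟩
    intro b hb
    by_contra hlt
    push_neg at hlt
    obtain ⟨c, hc⟩ := hb
    exact h2 ⟨c, pc_mono (by omega) hc⟩

lemma pack_comp {V W : Type*} {G : SimpleGraph V} {H : SimpleGraph W} (e : G ≃g H)
    {t : ℕ} {c : W → ℕ} (h : IsPackingColoring H t c) : IsPackingColoring G t (c ∘ e) := by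
  refine ⟨fun v => h.1 (e v), fun u v hne hc p => ?_⟩
  have := h.2 (e u) (e v) (fun heq => hne (e.injective heq)) hc (p.map e.toHom)
  simpa using this

lemma pc_iso {V W : Type*} {G : SimpleGraph V} {H : SimpleGraph W} (e : G ≃g H) :
    packingChromatic G = packingChromatic H := by
  unfold packingChromatic
  congr 1
  ext t
  exact ⟨fun ⟨c, hc⟩ => ⟨c ∘ e.symm, pack_comp e.symm hc⟩,
         fun ⟨c, hc⟩ => ⟨c ∘ e, pack_comp e hc⟩⟩

lemma count_ofFn {n : ℕ} (f : Fin n → Fin 4) (a : Fin 4) :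
    (List.ofFn f).count a = (Finset.univ.filter fun i => f i = a).card := by
  induction n with
  | zero => simp
  | succ m ih =>
    simp only [List.ofFn_succ, List.count_cons, ih, Finset.card_filter, Fin.sum_univ_succ,
      beq_iff_eq]
    simp [eq_comm, add_comm]

section QuotIso

/-- Raw adjacency formula of the Sierpiński graph. -/
def rawAdj (m : ℕ) (u v : Fin m → Fin 3) : Prop :=
  ∃ i : Fin m, (∀ j, j < i → u j = v j) ∧ u i ≠ v i ∧ ∀ j, i < j → u j = v i ∧ v j = u i

instance (m : ℕ) (u v : Fin m → Fin 3) : Decidable (rawAdj m u v) :=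
  inferInstanceAs (Decidable (∃ i : Fin m,
    (∀ j, j < i → u j = v j) ∧ u i ≠ v i ∧ ∀ j, i < j → u j = v i ∧ v j = u i))

lemma rawAdj_iff (m : ℕ) (u v : Fin m → Fin 3) :
    (sierpinski 3 m).Adj u v ↔ rawAdj m u v := Iff.rfl

instance (n : ℕ) (u v : Fin (n + 1) → Fin 3) : Decidable (nonCliqueRel n u v) :=
  inferInstanceAs (Decidable (∃ i : Fin (n + 1), (i : ℕ) < n ∧ (∀ j, j < i → u j = v j) ∧
    u i ≠ v i ∧ ∀ j, i < j → u j = v i ∧ v j = u i))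

variable {n N : ℕ} (φ : (Fin (n + 1) → Fin 3) → Fin N)
  (rep : Fin N → (Fin (n + 1) → Fin 3)) (GA : SimpleGraph (Fin N))
  (A : Fin N → Fin N → Bool)

lemma phi_eqv (h1 : ∀ u v, nonCliqueRel n u v → φ u = φ v) :
    ∀ u v, Relation.EqvGen (nonCliqueRel n) u v → φ u = φ v := by
  intro u v h
  induction h with
  | rel _ _ h => exact h1 _ _ h
  | refl => rfl
  | symm _ _ _ ih => exact ih.symm
  | trans _ _ _ _ _ ih1 ih2 => exact ih1.trans ih2

def quotIso
    (h1 : ∀ u v, nonCliqueRel n u v → φ u = φ v)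
    (h2 : ∀ u v, φ u = φ v → u = v ∨ nonCliqueRel n u v)
    (h3 : ∀ i, φ (rep i) = i)
    (h4 : ∀ u v, rawAdj (n + 1) u v → φ u ≠ φ v → A (φ u) (φ v) = true)
    (h5 : ∀ a b, A a b = true → ∃ u v, φ u = a ∧ φ v = b ∧ rawAdj (n + 1) u v)
    (h6 : ∀ a b, A a b = true → a ≠ b)
    (hGA : ∀ a b, GA.Adj a b ↔ A a b = true) :
    sierpinskiTriangle n ≃g GA := by
  have hEq : ∀ u v, Relation.EqvGen (nonCliqueRel n) u v → φ u = φ v := phi_eqv φ h1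
  have hExact : ∀ u v, φ u = φ v → Relation.EqvGen (nonCliqueRel n) u v := by
    intro u v h
    rcases h2 u v h with h | h
    · exact h ▸ Relation.EqvGen.refl u
    · exact Relation.EqvGen.rel _ _ h
  refine ⟨⟨Quotient.lift φ (fun a b h => hEq a b h),
      fun i => Quotient.mk (STSetoid n) (rep i), ?_, ?_⟩, ?_⟩
  · intro x
    induction x using Quotient.ind with
    | _ u => exact Quotient.sound (hExact _ _ (h3 (φ u)))
  · intro i
    exact h3 i
  · intro x y
    induction x using Quotient.ind with
    | _ u =>
    induction y using Quotient.ind with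
    | _ v =>
    show GA.Adj (φ u) (φ v) ↔ (sierpinskiTriangle n).Adj _ _
    rw [hGA]
    constructor
    · intro h
      obtain ⟨u', v', hu, hv, hadj⟩ := h5 _ _ h
      refine ⟨?_, u', v', Quotient.sound (hExact _ _ hu), Quotient.sound (hExact _ _ hv),
        (rawAdj_iff _ _ _).mpr hadj⟩
      intro heq
      exact h6 _ _ h (hEq _ _ (Quotient.exact heq))
    · rintro ⟨hne, u', v', hu, hv, hadj⟩
      have hu' : φ u' = φ u := hEq _ _ (Quotient.exact hu)
      have hv' : φ v' = φ v := hEq _ _ (Quotient.exact hv)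
      have hne' : φ u' ≠ φ v' := by
        rw [hu', hv']
        intro heq
        exact hne (Quotient.sound (hExact _ _ heq))
      have := h4 u' v' ((rawAdj_iff _ _ _).mp hadj) hne'
      rwa [hu', hv'] at this

end QuotIso

/-! ### Concrete data tables -/

def A3 : Fin 3 → Fin 3 → Bool := ![![false,true,true],![true,false,true],![true,true,false]]
def D3v : Fin 3 → Fin 3 → ℕ := ![![0,1,1],![1,0,1],![1,1,0]]
def nxt3 : Fin 3 → Fin 3 → Fin 3 := ![![0,1,2],![0,0,2],![0,1,0]]
def C3v : Fin 3 → ℕ := ![1,2,3]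
def tbl0 : Fin 3 → Fin 3 := ![0,1,2]
def phi0 : (Fin 1 → Fin 3) → Fin 3 := fun u => tbl0 (u 0)
def rep0 : Fin 3 → Fin 1 → Fin 3 := ![![0],![1],![2]]

def A6 : Fin 6 → Fin 6 → Bool := ![![false,true,false,true,false,false],![true,false,true,true,true,false],![false,true,false,false,true,false],![true,true,false,false,true,true],![false,true,true,true,false,true],![false,false,false,true,true,false]]
def D6v : Fin 6 → Fin 6 → ℕ := ![![0,1,2,1,2,2],![1,0,1,1,1,2],![2,1,0,2,1,2],![1,1,2,0,1,1],![2,1,1,1,0,1],![2,2,2,1,1,0]]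
def nxt6 : Fin 6 → Fin 6 → Fin 6 := ![![0,1,1,3,1,3],![0,0,2,3,4,3],![1,1,0,1,4,4],![0,1,1,0,4,5],![1,1,2,3,0,5],![3,3,4,3,4,0]]
def C6v : Fin 6 → ℕ := ![1,2,1,3,4,1]
def tbl1 : Fin 3 → Fin 3 → Fin 6 := ![![0,1,3],![1,2,4],![3,4,5]]
def phi1 : (Fin 2 → Fin 3) → Fin 6 := fun u => tbl1 (u 0) (u 1)
def rep1 : Fin 6 → Fin 2 → Fin 3 := ![![0,0],![0,1],![1,1],![0,2],![1,2],![2,2]]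

def A15 : Fin 15 → Fin 15 → Bool := ![![false,true,true,false,false,false,false,false,false,false,false,false,false,false,false],![true,false,true,true,true,false,false,false,false,false,false,false,false,false,false],![true,true,false,true,false,false,false,false,false,true,false,false,false,false,false],![false,true,true,false,true,false,false,false,false,true,false,false,false,false,false],![false,true,false,true,false,true,false,true,false,false,false,false,false,false,false],![false,false,false,false,true,false,true,true,true,false,false,false,false,false,false],![false,false,false,false,false,true,false,false,true,false,false,false,false,false,false],![false,false,false,false,true,true,false,false,true,false,false,true,false,false,false],![false,false,false,false,false,true,true,true,false,false,false,true,false,false,false],![false,false,true,true,false,false,false,false,false,false,true,false,true,false,false],![false,false,false,false,false,false,false,false,false,true,false,true,true,true,false],![false,false,false,false,false,false,false,true,true,false,true,false,false,true,false],![false,false,false,false,false,false,false,false,false,true,true,false,false,true,true],![false,false,false,false,false,false,false,false,false,false,true,true,true,false,true],![false,false,false,false,false,false,false,false,false,false,false,false,true,true,false]]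
def d15L : List (List ℕ) := [[0, 1, 1, 2, 2, 3, 4, 3, 4, 2, 3, 4, 3, 4, 4], [1, 0, 1, 1, 1, 2, 3, 2, 3, 2, 3, 3, 3, 4, 4], [1, 1, 0, 1, 2, 3, 4, 3, 4, 1, 2, 3, 2, 3, 3], [2, 1, 1, 0, 1, 2, 3, 2, 3, 1, 2, 3, 2, 3, 3], [2, 1, 2, 1, 0, 1, 2, 1, 2, 2, 3, 2, 3, 3, 4], [3, 2, 3, 2, 1, 0, 1, 1, 1, 3, 3, 2, 4, 3, 4], [4, 3, 4, 3, 2, 1, 0, 2, 1, 4, 3, 2, 4, 3, 4], [3, 2, 3, 2, 1, 1, 2, 0, 1, 3, 2, 1, 3, 2, 3], [4, 3, 4, 3, 2, 1, 1, 1, 0, 3, 2, 1, 3, 2, 3], [2, 2, 1, 1, 2, 3, 4, 3, 3, 0, 1, 2, 1, 2, 2], [3, 3, 2, 2, 3, 3, 3, 2, 2, 1, 0, 1, 1, 1, 2], [4, 3, 3, 3, 2, 2, 2, 1, 1, 2, 1, 0, 2, 1, 2], [3, 3, 2, 2, 3, 4, 4, 3, 3, 1, 1, 2, 0, 1, 1],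 [4, 4, 3, 3, 3, 3, 3, 2, 2, 2, 1, 1, 1, 0, 1], [4, 4, 3, 3, 4, 4, 4, 3, 3, 2, 2, 2, 1, 1, 0]]
def DN15 (i j : ℕ) : ℕ := (d15L.getD i []).getD j 0
def D15v : Fin 15 → Fin 15 → ℕ := fun i j => DN15 i j
def nxt15 : Fin 15 → Fin 15 → Fin 15 := ![![0,1,2,1,1,1,1,1,1,2,2,1,2,2,2],![0,0,2,3,4,4,4,4,4,2,2,4,2,2,2],![0,1,0,3,1,1,1,1,1,9,9,9,9,9,9],![1,1,2,0,4,4,4,4,4,9,9,4,9,9,9],![1,1,1,3,0,5,5,7,5,3,3,7,3,7,3],![4,4,4,4,4,0,6,7,8,4,7,7,4,7,7],![5,5,5,5,5,5,0,5,8,5,8,8,8,8,8],![4,4,4,4,4,5,5,0,8,4,11,11,11,11,11],![5,5,5,5,5,5,6,7,0,11,11,11,11,11,11],![2,2,2,3,3,3,3,3,10,0,10,10,12,10,12],![9,9,9,9,9,11,11,11,11,9,0,11,12,13,12],![7,7,10,7,7,7,8,7,8,10,10,0,10,13,13],![9,9,9,9,9,9,10,10,10,9,10,10,0,13,14],![1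0,10,10,10,11,11,11,11,11,10,10,11,12,0,14],![12,12,12,12,12,13,13,13,13,12,12,13,12,13,0]]
def C15v : Fin 15 → ℕ := ![1,2,3,1,4,1,2,5,3,6,1,7,2,8,1]
def mskL : List (List ℕ) := [[1, 2, 4, 8, 16, 32, 64, 128, 256, 512, 1024, 2048, 4096, 8192, 16384], [7, 31, 527, 542, 186, 496, 352, 2480, 2528, 5644, 15872, 11648, 30208, 31744, 28672], [543, 703, 5663, 5823, 3071, 2554, 2544, 11770, 11760, 32287, 32652, 32752, 32268, 32640, 32256], [5823, 8191, 32447, 32767, 16383, 12287, 11770, 32767, 32762, 32703, 32767, 32766, 32671, 32764, 32652]]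
def M15 (k i : ℕ) : ℕ := (mskL.getD k []).getD i 0
def tbl2 : Fin 3 → Fin 3 → Fin 3 → Fin 15 := ![![![0,1,2],![1,4,3],![2,3,9]],![![4,5,7],![5,6,8],![7,8,11]],![![9,10,12],![10,11,13],![12,13,14]]]
def phi2 : (Fin 3 → Fin 3) → Fin 15 := fun u => tbl2 (u 0) (u 1) (u 2)
def rep2 : Fin 15 → Fin 3 → Fin 3 := ![![0,0,0],![0,0,1],![0,0,2],![0,1,2],![0,1,1],![1,0,1],![1,1,1],![1,0,2],![1,1,2],![0,2,2],![2,0,1],![1,2,2],![2,0,2],![2,1,2],![2,2,2]]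

/-! ### Concrete graphs -/

lemma A3symm : ∀ i j, A3 i j = true → A3 j i = true := by decide
lemma A3irr : ∀ i, ¬ A3 i i = true := by decide
lemma A6symm : ∀ i j, A6 i j = true → A6 j i = true := by decide
lemma A6irr : ∀ i, ¬ A6 i i = true := by decide
set_option maxRecDepth 10000 in
lemma A15symm : ∀ i j, A15 i j = true → A15 j i = true := by decide
lemma A15irr : ∀ i, ¬ A15 i i = true := by decide

def G3 : SimpleGraph (Fin 3) where
  Adj i j := A3 i j = true
  symm := ⟨fun i j h => A3symm i j h⟩
  loopless := ⟨fun i h => A3irr i h⟩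

def G6 : SimpleGraph (Fin 6) where
  Adj i j := A6 i j = true
  symm := ⟨fun i j h => A6symm i j h⟩
  loopless := ⟨fun i h => A6irr i h⟩

def G15 : SimpleGraph (Fin 15) where
  Adj i j := A15 i j = true
  symm := ⟨fun i j h => A15symm i j h⟩
  loopless := ⟨fun i h => A15irr i h⟩

instance : DecidableRel G3.Adj := fun a b => inferInstanceAs (Decidable (A3 a b = true))
instance : DecidableRel G6.Adj := fun a b => inferInstanceAs (Decidable (A6 a b = true))
instance : DecidableRel G15.Adj := fun a b => inferInstanceAs (Decidable (A15 a b = true))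

/-! ### Distance facts -/

lemma h0_3 : ∀ u, D3v u u = 0 := by decide
lemma hz_3 : ∀ u v, D3v u v = 0 → u = v := by decide
lemma hlip_3 : ∀ a b v, G3.Adj a b → D3v a v ≤ D3v b v + 1 := by decide
lemma hstep_3 : ∀ u v, u ≠ v → G3.Adj u (nxt3 u v) ∧ D3v (nxt3 u v) v + 1 = D3v u v := by decide

lemma h0_6 : ∀ u, D6v u u = 0 := by decide
lemma hz_6 : ∀ u v, D6v u v = 0 → u = v := by decide
lemma hlip_6 : ∀ a b v, G6.Adj a b → D6v a v ≤ D6v b v + 1 := by decide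
lemma hstep_6 : ∀ u v, u ≠ v → G6.Adj u (nxt6 u v) ∧ D6v (nxt6 u v) v + 1 = D6v u v := by decide

set_option maxRecDepth 10000 in
lemma h0_15 : ∀ u, D15v u u = 0 := by decide
set_option maxRecDepth 10000 in
lemma hz_15 : ∀ u v, D15v u v = 0 → u = v := by decide
set_option maxRecDepth 100000 in
set_option maxHeartbeats 2000000 in
lemma hlip_15 : ∀ a b v, G15.Adj a b → D15v a v ≤ D15v b v + 1 := by decide
set_option maxRecDepth 100000 in
set_option maxHeartbeats 2000000 in
lemma hstep_15 : ∀ u v, u ≠ v → G15.Adj u (nxt15 u v) ∧ D15v (nxt15 u v) v + 1 = D15v u v := by decide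
set_option maxRecDepth 10000 in
lemma hD4_15 : ∀ u v, D15v u v ≤ 4 := by decide

/-! ### Upper bound colorings -/

lemma upper3 : (∀ v, 1 ≤ C3v v ∧ C3v v ≤ 3) ∧ ∀ u v, u ≠ v → C3v u = C3v v → C3v u < D3v u v := by
  decide

lemma upper6 : (∀ v, 1 ≤ C6v v ∧ C6v v ≤ 4) ∧ ∀ u v, u ≠ v → C6v u = C6v v → C6v u < D6v u v := by
  decide

set_option maxRecDepth 100000 in
set_option maxHeartbeats 2000000 in
lemma upper15 : (∀ v, 1 ≤ C15v v ∧ C15v v ≤ 8) ∧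
    ∀ u v, u ≠ v → C15v u = C15v v → C15v u < D15v u v := by decide

/-! ### Small lower bounds -/

lemma eq3fun (g : Fin 3 → Fin 3) : ![g 0, g 1, g 2] = g := by
  funext j; fin_cases j <;> rfl

lemma eq6fun (g : Fin 6 → Fin 4) : ![g 0, g 1, g 2, g 3, g 4, g 5] = g := by
  funext j; fin_cases j <;> rfl

lemma hdec3 : ¬ ∃ a b c : Fin 3,
    (∀ v, 1 ≤ ((![a,b,c] : Fin 3 → Fin 3) v : ℕ) ∧ ((![a,b,c] : Fin 3 → Fin 3) v : ℕ) ≤ 2) ∧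
    ∀ u v, u ≠ v → ((![a,b,c] : Fin 3 → Fin 3) u : ℕ) = ((![a,b,c] : Fin 3 → Fin 3) v : ℕ) →
      ((![a,b,c] : Fin 3 → Fin 3) u : ℕ) < D3v u v := by decide

lemma lower3 : ¬ ∃ c : Fin 3 → ℕ, (∀ v, 1 ≤ c v ∧ c v ≤ 2) ∧
    ∀ u v, u ≠ v → c u = c v → c u < D3v u v := by
  rintro ⟨c, hb, hp⟩
  have hlt : ∀ v, c v < 3 := fun v => by have := (hb v).2; omega
  set g : Fin 3 → Fin 3 := fun v => ⟨c v, hlt v⟩ with hg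
  have hgv : ∀ v, (g v : ℕ) = c v := fun v => rfl
  apply hdec3
  refine ⟨g 0, g 1, g 2, ?_⟩
  rw [eq3fun g]
  exact ⟨fun v => ⟨(hb v).1, (hb v).2⟩, fun u v h e => hp u v h e⟩

set_option maxRecDepth 100000 in
set_option maxHeartbeats 4000000 in
lemma hdec6 : ¬ ∃ a b c d e f : Fin 4,
    (∀ v, 1 ≤ ((![a,b,c,d,e,f] : Fin 6 → Fin 4) v : ℕ) ∧
      ((![a,b,c,d,e,f] : Fin 6 → Fin 4) v : ℕ) ≤ 3) ∧
    ∀ u v, u ≠ v →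
      ((![a,b,c,d,e,f] : Fin 6 → Fin 4) u : ℕ) = ((![a,b,c,d,e,f] : Fin 6 → Fin 4) v : ℕ) →
      ((![a,b,c,d,e,f] : Fin 6 → Fin 4) u : ℕ) < D6v u v := by decide

lemma lower6 : ¬ ∃ c : Fin 6 → ℕ, (∀ v, 1 ≤ c v ∧ c v ≤ 3) ∧
    ∀ u v, u ≠ v → c u = c v → c u < D6v u v := by
  rintro ⟨c, hb, hp⟩
  have hlt : ∀ v, c v < 4 := fun v => by have := (hb v).2; omega
  set g : Fin 6 → Fin 4 := fun v => ⟨c v, hlt v⟩ with hg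
  apply hdec6
  refine ⟨g 0, g 1, g 2, g 3, g 4, g 5, ?_⟩
  rw [eq6fun g]
  exact ⟨fun v => ⟨(hb v).1, (hb v).2⟩, fun u v h e => hp u v h e⟩

/-! ### The pruned exhaustive search for the lower bound of `ST^2` -/

def srch : ℕ → ℕ → ℕ → ℕ → ℕ → ℕ → Bool
  | 0, _, _, _, _, _ => false
  | n + 1, i, z, f1, f2, f3 =>
    (!(decide (z < 4)) || srch n (i+1) (z+1) f1 f2 f3) &&
    (f1.testBit i || srch n (i+1) z (f1 ||| M15 1 i) f2 f3) &&
    (f2.testBit i || srch n (i+1) z f1 (f2 ||| M15 2 i) f3) &&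
    (f3.testBit i || srch n (i+1) z f1 f2 (f3 ||| M15 3 i))

set_option maxRecDepth 100000 in
set_option maxHeartbeats 10000000 in
lemma srch_true : srch 15 0 0 0 0 0 = true := by decide

set_option maxRecDepth 10000 in
lemma Mfact1 : ∀ i b : Fin 15, (Nat.testBit (M15 1 i) b = true ↔ DN15 i b ≤ 1) := by decide
set_option maxRecDepth 10000 in
lemma Mfact2 : ∀ i b : Fin 15, (Nat.testBit (M15 2 i) b = true ↔ DN15 i b ≤ 2) := by decide
set_option maxRecDepth 10000 in
lemma Mfact3 : ∀ i b : Fin 15, (Nat.testBit (M15 3 i) b = true ↔ DN15 i b ≤ 3) := by decide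

lemma srch_complete (c : Fin 15 → Fin 4)
    (hcard : (Finset.univ.filter fun v => c v = 0).card ≤ 4)
    (hp : ∀ i j : Fin 15, i ≠ j → c i = c j → c i ≠ 0 → (c i : ℕ) < DN15 i j) :
    ∀ n i z f1 f2 f3, i + n = 15 →
      z = (Finset.univ.filter fun v : Fin 15 => (v : ℕ) < i ∧ c v = 0).card →
      (∀ b : Fin 15, f1.testBit b = true ↔ ∃ j : Fin 15, (j : ℕ) < i ∧ c j = 1 ∧ DN15 j b ≤ 1) →
      (∀ b : Fin 15, f2.testBit b = true ↔ ∃ j : Fin 15, (j : ℕ) < i ∧ c j = 2 ∧ DN15 j b ≤ 2) →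
      (∀ b : Fin 15, f3.testBit b = true ↔ ∃ j : Fin 15, (j : ℕ) < i ∧ c j = 3 ∧ DN15 j b ≤ 3) →
      srch n i z f1 f2 f3 = true → False := by
  intro n
  induction n with
  | zero => intro i z f1 f2 f3 _ _ _ _ _ hs; simp [srch] at hs
  | succ m ih =>
    intro i z f1 f2 f3 hi hz hf1 hf2 hf3 hs
    have hi15 : i < 15 := by omega
    set vi : Fin 15 := ⟨i, hi15⟩ with hvi
    have hvival : (vi : ℕ) = i := rfl
    simp only [srch, Bool.and_eq_true, Bool.or_eq_true, Bool.not_eq_true',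
      decide_eq_false_iff_not, not_lt] at hs
    obtain ⟨⟨⟨hs0, hs1⟩, hs2⟩, hs3⟩ := hs
    -- helper: the filter set at `i+1`
    have hself : ∀ j : Fin 15, (j : ℕ) < i + 1 ↔ (j : ℕ) < i ∨ j = vi := by
      intro j
      constructor
      · intro h
        rcases Nat.lt_or_ge (j : ℕ) i with h' | h'
        · exact Or.inl h'
        · exact Or.inr (Fin.ext (by omega))
      · rintro (h | rfl)
        · omega
        · omega
    have hne : ∀ j : Fin 15, (j : ℕ) < i → j ≠ vi := by
      intro j hj heq
      rw [heq] at hj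
      omega
    -- case on the color of vertex i
    have h4 : c vi = 0 ∨ c vi = 1 ∨ c vi = 2 ∨ c vi = 3 := by
      have := (c vi).isLt
      rcases Nat.lt_or_ge (c vi : ℕ) 1 with h | h
      · exact Or.inl (Fin.ext (by omega))
      rcases Nat.lt_or_ge (c vi : ℕ) 2 with h' | h'
      · exact Or.inr (Or.inl (Fin.ext (by omega)))
      rcases Nat.lt_or_ge (c vi : ℕ) 3 with h'' | h''
      · exact Or.inr (Or.inr (Or.inl (Fin.ext (by omega))))
      · exact Or.inr (Or.inr (Or.inr (Fin.ext (by omega))))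
    -- the F-invariants are preserved when the new vertex gets a different color
    have hkeep : ∀ (k : Fin 4) (f : ℕ), c vi ≠ k →
        (∀ b : Fin 15, f.testBit b = true ↔ ∃ j : Fin 15, (j : ℕ) < i ∧ c j = k ∧ DN15 j b ≤ (k : ℕ)) →
        (∀ b : Fin 15, f.testBit b = true ↔ ∃ j : Fin 15, (j : ℕ) < i + 1 ∧ c j = k ∧ DN15 j b ≤ (k : ℕ)) := by
      intro k f hck hf b
      rw [hf b]
      constructor
      · rintro ⟨j, hj, hcj, hd⟩; exact ⟨j, by omega, hcj, hd⟩
      · rintro ⟨j, hj, hcj, hd⟩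
        rcases (hself j).mp hj with h | rfl
        · exact ⟨j, h, hcj, hd⟩
        · exact absurd hcj hck
    -- the F-invariant for the updated color
    have hupd : ∀ (k : Fin 4) (f : ℕ), c vi = k →
        (∀ b : Fin 15, f.testBit b = true ↔ ∃ j : Fin 15, (j : ℕ) < i ∧ c j = k ∧ DN15 j b ≤ (k : ℕ)) →
        (∀ b : Fin 15, (Nat.testBit (M15 (k : ℕ) i) b = true ↔ DN15 i b ≤ (k : ℕ)) ) →
        (∀ b : Fin 15, (f ||| M15 (k : ℕ) i).testBit b = true ↔
          ∃ j : Fin 15, (j : ℕ) < i + 1 ∧ c j = k ∧ DN15 j b ≤ (k : ℕ)) := by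
      intro k f hck hf hM b
      rw [Nat.testBit_or, Bool.or_eq_true, hf b, hM b]
      constructor
      · rintro (⟨j, hj, hcj, hd⟩ | hd)
        · exact ⟨j, by omega, hcj, hd⟩
        · exact ⟨vi, by omega, hck, hd⟩
      · rintro ⟨j, hj, hcj, hd⟩
        rcases (hself j).mp hj with h | rfl
        · exact Or.inl ⟨j, h, hcj, hd⟩
        · exact Or.inr hd
    -- the new vertex cannot be blocked for its own color
    have hblock : ∀ (k : Fin 4) (f : ℕ), c vi = k → k ≠ 0 →
        (∀ b : Fin 15, f.testBit b = true ↔ ∃ j : Fin 15, (j : ℕ) < i ∧ c j = k ∧ DN15 j b ≤ (k : ℕ)) →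
        f.testBit i = false := by
      intro k f hck hk0 hf
      by_contra h
      rw [Bool.not_eq_false] at h
      have h' : Nat.testBit f (vi : ℕ) = true := h
      obtain ⟨j, hj, hcj, hd⟩ := (hf vi).mp h'
      have hjne : j ≠ vi := hne j hj
      have := hp j vi hjne (by rw [hcj, hck]) (by rw [hcj]; exact hk0)
      rw [hcj] at this
      omega
    have hZsame : c vi ≠ 0 →
        (Finset.univ.filter fun v : Fin 15 => (v : ℕ) < i + 1 ∧ c v = 0) =
        (Finset.univ.filter fun v : Fin 15 => (v : ℕ) < i ∧ c v = 0) := by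
      intro hcv
      ext v
      simp only [Finset.mem_filter, Finset.mem_univ, true_and]
      constructor
      · rintro ⟨hv, h0⟩
        rcases (hself v).mp hv with h' | rfl
        · exact ⟨h', h0⟩
        · exact absurd h0 hcv
      · rintro ⟨hv, h0⟩
        exact ⟨by omega, h0⟩
    rcases h4 with hc0 | hc1 | hc2 | hc3
    · -- color 0 : uncolored vertex, budget must allow it
      have hZ : (Finset.univ.filter fun v : Fin 15 => (v : ℕ) < i + 1 ∧ c v = 0) =
          insert vi (Finset.univ.filter fun v : Fin 15 => (v : ℕ) < i ∧ c v = 0) := by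
        ext v
        simp only [Finset.mem_filter, Finset.mem_univ, true_and, Finset.mem_insert]
        constructor
        · rintro ⟨hv, hcv⟩
          rcases (hself v).mp hv with h | rfl
          · exact Or.inr ⟨h, hcv⟩
          · exact Or.inl rfl
        · rintro (rfl | ⟨hv, hcv⟩)
          · exact ⟨by omega, hc0⟩
          · exact ⟨by omega, hcv⟩
      have hvnot : vi ∉ (Finset.univ.filter fun v : Fin 15 => (v : ℕ) < i ∧ c v = 0) := by
        simp only [Finset.mem_filter, Finset.mem_univ, true_and, not_and]
        intro h
        omega
      have hcard1 : (Finset.univ.filter fun v : Fin 15 => (v : ℕ) < i + 1 ∧ c v = 0).card = z + 1 := by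
        rw [hZ, Finset.card_insert_of_notMem hvnot, hz]
      have hsub : (Finset.univ.filter fun v : Fin 15 => (v : ℕ) < i + 1 ∧ c v = 0) ⊆
          (Finset.univ.filter fun v => c v = 0) :=
        fun v hv => by simp only [Finset.mem_filter, Finset.mem_univ, true_and] at hv ⊢; exact hv.2
      have hzlt : z < 4 := by
        have := Finset.card_le_card hsub
        omega
      rcases hs0 with h | h
      · omega
      · exact ih (i+1) (z+1) f1 f2 f3 (by omega) (by omega)
          (hkeep 1 f1 (by rw [hc0]; decide) hf1)
          (hkeep 2 f2 (by rw [hc0]; decide) hf2)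
          (hkeep 3 f3 (by rw [hc0]; decide) hf3) h
    · rcases hs1 with h | h
      · rw [hblock 1 f1 hc1 (by decide) hf1] at h; simp at h
      · exact ih (i+1) z (f1 ||| M15 1 i) f2 f3 (by omega)
          (by rw [hz, hZsame (by rw [hc1]; decide)])
          (hupd 1 f1 hc1 hf1 (fun b => Mfact1 vi b))
          (hkeep 2 f2 (by rw [hc1]; decide) hf2)
          (hkeep 3 f3 (by rw [hc1]; decide) hf3) h
    · rcases hs2 with h | h
      · rw [hblock 2 f2 hc2 (by decide) hf2] at h; simp at h
      · exact ih (i+1) z f1 (f2 ||| M15 2 i) f3 (by omega)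
          (by rw [hz, hZsame (by rw [hc2]; decide)])
          (hkeep 1 f1 (by rw [hc2]; decide) hf1)
          (hupd 2 f2 hc2 hf2 (fun b => Mfact2 vi b))
          (hkeep 3 f3 (by rw [hc2]; decide) hf3) h
    · rcases hs3 with h | h
      · rw [hblock 3 f3 hc3 (by decide) hf3] at h; simp at h
      · exact ih (i+1) z f1 f2 (f3 ||| M15 3 i) (by omega)
          (by rw [hz, hZsame (by rw [hc3]; decide)])
          (hkeep 1 f1 (by rw [hc3]; decide) hf1)
          (hkeep 2 f2 (by rw [hc3]; decide) hf2)
          (hupd 3 f3 hc3 hf3 (fun b => Mfact3 vi b)) h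

lemma noGood (c : Fin 15 → Fin 4)
    (hcard : (Finset.univ.filter fun v => c v = 0).card ≤ 4)
    (hp : ∀ i j : Fin 15, i ≠ j → c i = c j → c i ≠ 0 → (c i : ℕ) < DN15 i j) : False := by
  apply srch_complete c hcard hp 15 0 0 0 0 0 rfl
  · rw [Finset.card_eq_zero.mpr]
    ext v
    simp
  · intro b; simp
  · intro b; simp
  · intro b; simp
  · exact srch_true

lemma lower15 : ¬ ∃ c : Fin 15 → ℕ, (∀ v, 1 ≤ c v ∧ c v ≤ 7) ∧
    ∀ u v, u ≠ v → c u = c v → c u < D15v u v := by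
  rintro ⟨c, hb, hp⟩
  have hlt4 : ∀ v, c v ≤ 3 → c v < 4 := fun v h => by omega
  let c4 : Fin 15 → Fin 4 := fun v => if h : c v ≤ 3 then ⟨c v, by omega⟩ else 0
  have hval : ∀ v, c v ≤ 3 → (c4 v : ℕ) = c v := fun v h => by simp [c4, h]
  have hval0 : ∀ v, ¬ c v ≤ 3 → c4 v = 0 := fun v h => by simp [c4, h]
  have hzero : ∀ v, c4 v = 0 ↔ 4 ≤ c v := by
    intro v
    constructor
    · intro h
      by_contra h4
      push_neg at h4
      have h3 : c v ≤ 3 := by omega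
      have := hval v h3
      rw [h] at this
      have := (hb v).1
      simp only [Fin.val_zero] at *
      omega
    · intro h
      exact hval0 v (by omega)
  have hcard : (Finset.univ.filter fun v => c4 v = 0).card ≤ 4 := by
    have hmaps : ∀ v ∈ (Finset.univ.filter fun v => c4 v = 0), c v ∈ Finset.Icc 4 7 := by
      intro v hv
      rw [Finset.mem_filter] at hv
      rw [Finset.mem_Icc]
      exact ⟨(hzero v).mp hv.2, (hb v).2⟩
    have hinj : ∀ u ∈ (Finset.univ.filter fun v => c4 v = 0),
        ∀ v ∈ (Finset.univ.filter fun v => c4 v = 0), c u = c v → u = v := by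
      intro u hu v hv he
      by_contra hne
      rw [Finset.mem_filter] at hu hv
      have h4u : 4 ≤ c u := (hzero u).mp hu.2
      have := hp u v hne he
      have := hD4_15 u v
      omega
    have := Finset.card_le_card_of_injOn c hmaps hinj
    have hIcc : (Finset.Icc 4 7).card = 4 := by decide
    omega
  apply noGood c4 hcard
  intro i j hne he h0
  have h3i : c i ≤ 3 := by
    by_contra h
    exact h0 (hval0 i h)
  have h3j : c j ≤ 3 := by
    by_contra h
    rw [hval0 j h] at he
    exact h0 he
  have hei : (c4 i : ℕ) = c i := hval i h3i
  have hej : (c4 j : ℕ) = c j := hval j h3j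
  have hcc : c i = c j := by
    rw [← hei, ← hej, he]
  have := hp i j hne hcc
  rw [hei]
  exact this

/-! ### The packing chromatic numbers of the concrete graphs -/

lemma pcG3 : packingChromatic G3 = 3 := by
  apply pc_eq
  · exact ⟨C3v, (pack_iff G3 D3v nxt3 hlip_3 h0_3 hz_3 hstep_3 3 C3v).mpr upper3⟩
  · show ¬∃ c, IsPackingColoring G3 (3 - 1) c
    rintro ⟨c, hc⟩
    rw [pack_iff G3 D3v nxt3 hlip_3 h0_3 hz_3 hstep_3 _ c] at hc
    exact lower3 ⟨c, hc⟩

lemma pcG6 : packingChromatic G6 = 4 := by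
  apply pc_eq
  · exact ⟨C6v, (pack_iff G6 D6v nxt6 hlip_6 h0_6 hz_6 hstep_6 4 C6v).mpr upper6⟩
  · show ¬∃ c, IsPackingColoring G6 (4 - 1) c
    rintro ⟨c, hc⟩
    rw [pack_iff G6 D6v nxt6 hlip_6 h0_6 hz_6 hstep_6 _ c] at hc
    exact lower6 ⟨c, hc⟩

lemma pcG15 : packingChromatic G15 = 8 := by
  apply pc_eq
  · exact ⟨C15v, (pack_iff G15 D15v nxt15 hlip_15 h0_15 hz_15 hstep_15 8 C15v).mpr upper15⟩
  · show ¬∃ c, IsPackingColoring G15 (8 - 1) c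
    rintro ⟨c, hc⟩
    rw [pack_iff G15 D15v nxt15 hlip_15 h0_15 hz_15 hstep_15 _ c] at hc
    exact lower15 ⟨c, hc⟩

/-! ### The isomorphisms between the quotient graphs and the concrete graphs -/

lemma eta1 (u : Fin 1 → Fin 3) : ![u 0] = u := by
  funext j; fin_cases j <;> rfl

lemma eta2 (u : Fin 2 → Fin 3) : ![u 0, u 1] = u := by
  funext j; fin_cases j <;> rfl

lemma eta3 (u : Fin 3 → Fin 3) : ![u 0, u 1, u 2] = u := by
  funext j; fin_cases j <;> rfl

-- n = 0
lemma t0_1 : ∀ a x : Fin 3, nonCliqueRel 0 ![a] ![x] → phi0 ![a] = phi0 ![x] := by decide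
lemma t0_2 : ∀ a x : Fin 3, phi0 ![a] = phi0 ![x] → a = x ∨ nonCliqueRel 0 ![a] ![x] := by decide
lemma t0_3 : ∀ i, phi0 (rep0 i) = i := by decide
lemma t0_4 : ∀ a x : Fin 3, rawAdj 1 ![a] ![x] → phi0 ![a] ≠ phi0 ![x] →
    A3 (phi0 ![a]) (phi0 ![x]) = true := by decide
lemma t0_5 : ∀ p q : Fin 3, A3 p q = true → ∃ a x : Fin 3,
    phi0 ![a] = p ∧ phi0 ![x] = q ∧ rawAdj 1 ![a] ![x] := by decide
lemma t0_6 : ∀ p q : Fin 3, A3 p q = true → p ≠ q := by decide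

def iso0 : sierpinskiTriangle 0 ≃g G3 := by
  apply quotIso phi0 rep0 G3 A3
  · intro u v h
    have := t0_1 (u 0) (v 0)
    rw [eta1 u, eta1 v] at this
    exact this h
  · intro u v h
    have := t0_2 (u 0) (v 0)
    rw [eta1 u, eta1 v] at this
    rcases this h with h' | h'
    · left; funext j; fin_cases j; exact h'
    · right; exact h'
  · exact t0_3
  · intro u v h hne
    have := t0_4 (u 0) (v 0)
    rw [eta1 u, eta1 v] at this
    exact this h hne
  · intro a b h
    obtain ⟨x, y, h1, h2, h3⟩ := t0_5 a b h
    exact ⟨![x], ![y], h1, h2, h3⟩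
  · exact t0_6
  · intro a b; exact Iff.rfl

-- n = 1
lemma t1_1 : ∀ a b x y : Fin 3, nonCliqueRel 1 ![a,b] ![x,y] → phi1 ![a,b] = phi1 ![x,y] := by
  decide
lemma t1_2 : ∀ a b x y : Fin 3, phi1 ![a,b] = phi1 ![x,y] →
    (a = x ∧ b = y) ∨ nonCliqueRel 1 ![a,b] ![x,y] := by decide
lemma t1_3 : ∀ i, phi1 (rep1 i) = i := by decide
lemma t1_4 : ∀ a b x y : Fin 3, rawAdj 2 ![a,b] ![x,y] → phi1 ![a,b] ≠ phi1 ![x,y] →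
    A6 (phi1 ![a,b]) (phi1 ![x,y]) = true := by decide
set_option maxHeartbeats 1000000 in
lemma t1_5 : ∀ p q : Fin 6, A6 p q = true → ∃ a b x y : Fin 3,
    phi1 ![a,b] = p ∧ phi1 ![x,y] = q ∧ rawAdj 2 ![a,b] ![x,y] := by decide
lemma t1_6 : ∀ p q : Fin 6, A6 p q = true → p ≠ q := by decide

def iso1 : sierpinskiTriangle 1 ≃g G6 := by
  apply quotIso phi1 rep1 G6 A6
  · intro u v h
    have := t1_1 (u 0) (u 1) (v 0) (v 1)
    rw [eta2 u, eta2 v] at this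
    exact this h
  · intro u v h
    have := t1_2 (u 0) (u 1) (v 0) (v 1)
    rw [eta2 u, eta2 v] at this
    rcases this h with ⟨h1, h2⟩ | h'
    · left; funext j; fin_cases j <;> assumption
    · right; exact h'
  · exact t1_3
  · intro u v h hne
    have := t1_4 (u 0) (u 1) (v 0) (v 1)
    rw [eta2 u, eta2 v] at this
    exact this h hne
  · intro a b h
    obtain ⟨x1, x2, y1, y2, h1, h2, h3⟩ := t1_5 a b h
    exact ⟨![x1,x2], ![y1,y2], h1, h2, h3⟩
  · exact t1_6
  · intro a b; exact Iff.rfl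

-- n = 2
set_option maxRecDepth 100000 in
set_option maxHeartbeats 4000000 in
lemma t2_1 : ∀ a b c x y z : Fin 3, nonCliqueRel 2 ![a,b,c] ![x,y,z] →
    phi2 ![a,b,c] = phi2 ![x,y,z] := by decide
set_option maxRecDepth 100000 in
set_option maxHeartbeats 4000000 in
lemma t2_2 : ∀ a b c x y z : Fin 3, phi2 ![a,b,c] = phi2 ![x,y,z] →
    (a = x ∧ b = y ∧ c = z) ∨ nonCliqueRel 2 ![a,b,c] ![x,y,z] := by decide
set_option maxRecDepth 10000 in
lemma t2_3 : ∀ i, phi2 (rep2 i) = i := by decide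
set_option maxRecDepth 100000 in
set_option maxHeartbeats 4000000 in
lemma t2_4 : ∀ a b c x y z : Fin 3, rawAdj 3 ![a,b,c] ![x,y,z] →
    phi2 ![a,b,c] ≠ phi2 ![x,y,z] → A15 (phi2 ![a,b,c]) (phi2 ![x,y,z]) = true := by decide
set_option maxRecDepth 100000 in
set_option maxHeartbeats 8000000 in
lemma t2_5 : ∀ p q : Fin 15, A15 p q = true → ∃ a b c x y z : Fin 3,
    phi2 ![a,b,c] = p ∧ phi2 ![x,y,z] = q ∧ rawAdj 3 ![a,b,c] ![x,y,z] := by decide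
set_option maxRecDepth 10000 in
lemma t2_6 : ∀ p q : Fin 15, A15 p q = true → p ≠ q := by decide

def iso2 : sierpinskiTriangle 2 ≃g G15 := by
  apply quotIso phi2 rep2 G15 A15
  · intro u v h
    have := t2_1 (u 0) (u 1) (u 2) (v 0) (v 1) (v 2)
    rw [eta3 u, eta3 v] at this
    exact this h
  · intro u v h
    have := t2_2 (u 0) (u 1) (u 2) (v 0) (v 1) (v 2)
    rw [eta3 u, eta3 v] at this
    rcases this h with ⟨h1, h2, h3⟩ | h'
    · left; funext j; fin_cases j <;> assumption
    · right; exact h'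
  · exact t2_3
  · intro u v h hne
    have := t2_4 (u 0) (u 1) (u 2) (v 0) (v 1) (v 2)
    rw [eta3 u, eta3 v] at this
    exact this h hne
  · intro a b h
    obtain ⟨x1, x2, x3, y1, y2, y3, h1, h2, h3⟩ := t2_5 a b h
    exact ⟨![x1,x2,x3], ![y1,y2,y3], h1, h2, h3⟩
  · exact t2_6
  · intro a b; exact Iff.rfl

/-- `χρ(ST^0_3) = 3`, `χρ(ST^1_3) = 4` and `χρ(ST^2_3) = 8`. -/
theorem packingChromatic_sierpinskiTriangle_small :
    packingChromatic (sierpinskiTriangle 0) = 3 ∧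
    packingChromatic (sierpinskiTriangle 1) = 4 ∧
    packingChromatic (sierpinskiTriangle 2) = 8 := by
  refine ⟨?_, ?_, ?_⟩
  · rw [pc_iso iso0]; exact pcG3
  · rw [pc_iso iso1]; exact pcG6
  · rw [pc_iso iso2]; exact pcG15
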